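/- Let P₁, P₂ be probability measures on a measurable space E with sup_{D} (P₁(D) − P₂(D)) ≤ Δ < 1, and let w be a bounded measurable function with span seminorm ‖w‖_sp. Then log(∫ e^w dP₁) − log(∫ e^w dP₂) ≤ log(e^{‖w‖_sp} Δ + 1). -/

import Mathlib

open MeasureTheory

/-- If `P₁, P₂` are probability measures with `P₁(D) − P₂(D) ≤ Δ < 1` for all
measurable `D`, and `w` is bounded measurable, then
`log ∫ e^w dP₁ − log ∫ e^w dP₂ ≤ log(e^{‖w‖_sp} Δ + 1)`, where
`‖w‖_sp = sup w − inf w`. -/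
theorem log_laplace_span_estimate
    {E : Type*} [MeasurableSpace E]
    (P₁ P₂ : Measure E) [IsProbabilityMeasure P₁] [IsProbabilityMeasure P₂]
    (Δ : ℝ) (hΔ0 : 0 ≤ Δ) (hΔ1 : Δ < 1)
    (hΔ : ∀ D : Set E, MeasurableSet D → (P₁ D).toReal - (P₂ D).toReal ≤ Δ)
    (w : E → ℝ) (hwm : Measurable w) (C : ℝ) (hwb : ∀ x, |w x| ≤ C) :
    Real.log (∫ y, Real.exp (w y) ∂P₁) - Real.log (∫ y, Real.exp (w y) ∂P₂)
      ≤ Real.log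
          (Real.exp (sSup (Set.range w) - sInf (Set.range w)) * Δ + 1) := by
  have hE : Nonempty E := by
    by_contra h
    rw [not_nonempty_iff] at h
    have h1 := measure_univ (μ := P₁)
    rw [Set.univ_eq_empty_iff.2 h, measure_empty] at h1
    exact zero_ne_one h1
  set m := sInf (Set.range w) with hm
  set M := sSup (Set.range w) with hM
  have hbdd : BddAbove (Set.range w) := ⟨C, by rintro _ ⟨x, rfl⟩; exact (abs_le.1 (hwb x)).2⟩
  have hbddb : BddBelow (Set.range w) := ⟨-C, by rintro _ ⟨x, rfl⟩; exact (abs_le.1 (hwb x)).1⟩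
  have hle : ∀ x, w x ≤ M := fun x => le_csSup hbdd ⟨x, rfl⟩
  have hge : ∀ x, m ≤ w x := fun x => csInf_le hbddb ⟨x, rfl⟩
  have hint : ∀ (μ : Measure E) [IsFiniteMeasure μ],
      Integrable (fun y => Real.exp (w y)) μ := by
    intro μ _
    refine (integrable_const (Real.exp M)).mono' hwm.exp.aestronglyMeasurable
      (ae_of_all _ fun x => ?_)
    rw [Real.norm_eq_abs, abs_of_nonneg (Real.exp_nonneg _)]
    exact Real.exp_le_exp.2 (hle x)
  set s := P₁.toSignedMeasure - P₂.toSignedMeasure with hs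
  obtain ⟨i, hi₁, hi₂, hi₃, hpos, hneg⟩ := s.toJordanDecomposition_spec
  set ν₁ := s.toJordanDecomposition.posPart with hν₁d
  set ν₂ := s.toJordanDecomposition.negPart with hν₂d
  have sapp : ∀ A : Set E, MeasurableSet A → s A = (P₁ A).toReal - (P₂ A).toReal := by
    intro A hA
    rw [hs, Measure.toSignedMeasure_sub_apply hA]; rfl
  have key : P₁ + ν₂ = P₂ + ν₁ := by
    ext A hA
    have h1 : s A = (ν₁ A).toReal - (ν₂ A).toReal := by
      conv_lhs => rw [← s.toSignedMeasure_toJordanDecomposition]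
      rw [JordanDecomposition.toSignedMeasure,
        Measure.toSignedMeasure_sub_apply hA]; rfl
    have h2 := sapp A hA
    have h3 : (P₁ A).toReal + (ν₂ A).toReal = (P₂ A).toReal + (ν₁ A).toReal := by
      rw [h1] at h2; linarith
    rw [Measure.add_apply, Measure.add_apply,
      ← ENNReal.toReal_add (measure_ne_top _ _) (measure_ne_top _ _),
      ← ENNReal.toReal_add (measure_ne_top _ _) (measure_ne_top _ _)] at *
    exact (ENNReal.toReal_eq_toReal_iff'
      (by finiteness) (by finiteness)).1 h3
  have hν1 : (ν₁ Set.univ).toReal ≤ Δ := by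
    rw [hpos, SignedMeasure.toMeasureOfZeroLE_apply _ hi₂ hi₁ MeasurableSet.univ]
    simp only [ENNReal.coe_toReal, NNReal.coe_mk]
    rw [Set.inter_univ, sapp i hi₁]
    exact hΔ i hi₁
  have hintsum : (∫ y, Real.exp (w y) ∂P₁) + ∫ y, Real.exp (w y) ∂ν₂
      = (∫ y, Real.exp (w y) ∂P₂) + ∫ y, Real.exp (w y) ∂ν₁ := by
    rw [← integral_add_measure (hint P₁) (hint ν₂),
      ← integral_add_measure (hint P₂) (hint ν₁), key]
  have h1 : ∫ y, Real.exp (w y) ∂ν₁ ≤ Real.exp M * (ν₁ Set.univ).toReal := by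
    calc ∫ y, Real.exp (w y) ∂ν₁ ≤ ∫ _, Real.exp M ∂ν₁ :=
          integral_mono (hint ν₁) (integrable_const _) fun x => Real.exp_le_exp.2 (hle x)
      _ = (ν₁ Set.univ).toReal * Real.exp M := by rw [integral_const]; simp [smul_eq_mul]; rfl
      _ = Real.exp M * (ν₁ Set.univ).toReal := mul_comm _ _
  have h2 : 0 ≤ ∫ y, Real.exp (w y) ∂ν₂ := integral_nonneg fun x => Real.exp_nonneg _
  have hdiff : (∫ y, Real.exp (w y) ∂P₁) - ∫ y, Real.exp (w y) ∂P₂ ≤ Real.exp M * Δ := by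
    have h3 : Real.exp M * (ν₁ Set.univ).toReal ≤ Real.exp M * Δ :=
      mul_le_mul_of_nonneg_left hν1 (Real.exp_nonneg M)
    linarith
  have hb : Real.exp m ≤ ∫ y, Real.exp (w y) ∂P₂ := by
    calc Real.exp m = ∫ _, Real.exp m ∂P₂ := by simp
      _ ≤ _ := integral_mono (integrable_const _) (hint P₂) fun x => Real.exp_le_exp.2 (hge x)
  have hbpos : 0 < ∫ y, Real.exp (w y) ∂P₂ := lt_of_lt_of_le (Real.exp_pos m) hb
  have hapos : 0 < ∫ y, Real.exp (w y) ∂P₁ := by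
    have : Real.exp m = ∫ _, Real.exp m ∂P₁ := by simp
    calc (0:ℝ) < Real.exp m := Real.exp_pos m
      _ ≤ _ := by
        rw [this]
        exact integral_mono (integrable_const _) (hint P₁) fun x => Real.exp_le_exp.2 (hge x)
  have hexpM : Real.exp M = Real.exp (M - m) * Real.exp m := by
    rw [← Real.exp_add]; ring_nf
  have hfin : (∫ y, Real.exp (w y) ∂P₁)
      ≤ (∫ y, Real.exp (w y) ∂P₂) * (Real.exp (M - m) * Δ + 1) := by
    nlinarith [mul_nonneg (mul_nonneg (sub_nonneg.2 hb) hΔ0) (Real.exp_pos (M - m)).le]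
  have hc : 0 < Real.exp (M - m) * Δ + 1 := by positivity
  have hlog := Real.log_le_log hapos hfin
  rw [Real.log_mul hbpos.ne' hc.ne'] at hlog
  linarith
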